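/- arXiv:1008.0804 — 2 statements merged into one kernel-verified Lean document; each statement's English description precedes it below -/
import Mathlib

section
/- Buchberger's first criterion: if f and g are polynomials whose leading monomials (with respect to a fixed monomial order) are relatively prime (i.e., lcm(T(f),T(g)) = T(f)·T(g)), then the S-polynomial S(f,g) reduces to zero modulo {f,g}. -/
open MvPolynomial

/-- The leading exponent (exponent of the largest monomial) of a multivariate
polynomial with respect to a monomial order `m`. -/
noncomputable def leadExp {σ : Type*} (m : MonomialOrder σ) (f : MvPolynomial σ ℂ) :
    σ →₀ ℕ :=
  m.toSyn.symm (f.support.sup (fun d => m.toSyn d))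

section Aux

variable {σ : Type*} (m : MonomialOrder σ)

lemma toSyn_leadExp (f : MvPolynomial σ ℂ) :
    m.toSyn (leadExp m f) = f.support.sup (fun d => m.toSyn d) := by
  simp [leadExp]

lemma le_leadExp {f : MvPolynomial σ ℂ} {d : σ →₀ ℕ} (hd : d ∈ f.support) :
    m.toSyn d ≤ m.toSyn (leadExp m f) := by
  rw [toSyn_leadExp]; exact Finset.le_sup hd

lemma coeff_eq_zero_of_lt {f : MvPolynomial σ ℂ} {d : σ →₀ ℕ}
    (h : m.toSyn (leadExp m f) < m.toSyn d) : f.coeff d = 0 := by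
  by_contra h'
  exact absurd (le_leadExp m (mem_support_iff.mpr h')) (not_le.mpr h)

lemma leadExp_mem {f : MvPolynomial σ ℂ} (hf : f ≠ 0) : leadExp m f ∈ f.support := by
  have hne : f.support.Nonempty := support_nonempty.mpr hf
  obtain ⟨b, hb, hbe⟩ := Finset.exists_mem_eq_sup f.support hne (fun d => m.toSyn d)
  have : leadExp m f = b := by
    rw [leadExp, hbe]; exact m.toSyn.symm_apply_apply b
  rwa [this]

lemma leadExp_neg (f : MvPolynomial σ ℂ) : leadExp m (-f) = leadExp m f := by
  unfold leadExp
  rw [MvPolynomial.support_neg]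

lemma coeff_mul_leadExp [DecidableEq σ] (p q : MvPolynomial σ ℂ) :
    (p * q).coeff (leadExp m p + leadExp m q)
      = p.coeff (leadExp m p) * q.coeff (leadExp m q) := by
  rw [MvPolynomial.coeff_mul]
  have hmem : (leadExp m p, leadExp m q) ∈ Finset.HasAntidiagonal.antidiagonal (leadExp m p + leadExp m q) :=
    Finset.HasAntidiagonal.mem_antidiagonal.mpr rfl
  refine Finset.sum_eq_single_of_mem _ hmem ?_
  intro b hb hne
  rw [Finset.HasAntidiagonal.mem_antidiagonal] at hb
  rcases lt_or_ge (m.toSyn (leadExp m p)) (m.toSyn b.1) with h1 | h1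
  · rw [coeff_eq_zero_of_lt m h1, zero_mul]
  · rcases lt_or_ge (m.toSyn (leadExp m q)) (m.toSyn b.2) with h2 | h2
    · rw [coeff_eq_zero_of_lt m h2, mul_zero]
    · exfalso
      apply hne
      have hsum : m.toSyn b.1 + m.toSyn b.2
          = m.toSyn (leadExp m p) + m.toSyn (leadExp m q) := by
        rw [← map_add, ← map_add, hb]
      have e1 : m.toSyn b.1 = m.toSyn (leadExp m p) := by
        by_contra hne1
        have hlt : m.toSyn b.1 < m.toSyn (leadExp m p) := lt_of_le_of_ne h1 hne1
        have := add_lt_add_of_lt_of_le hlt h2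
        rw [hsum] at this
        exact lt_irrefl _ this
      have e2 : m.toSyn b.2 = m.toSyn (leadExp m q) := by
        rw [e1] at hsum
        exact add_left_cancel hsum
      exact Prod.ext (m.toSyn.injective e1) (m.toSyn.injective e2)

lemma leadExp_mul [DecidableEq σ] {p q : MvPolynomial σ ℂ} (hp : p ≠ 0) (hq : q ≠ 0) :
    leadExp m (p * q) = leadExp m p + leadExp m q := by
  apply m.toSyn.injective
  apply le_antisymm
  · rw [toSyn_leadExp]
    apply Finset.sup_le
    intro d hd
    obtain ⟨a, ha, b, hb, rfl⟩ := Finset.mem_add.mp (MvPolynomial.support_mul _ _ hd)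
    rw [map_add, map_add]
    exact add_le_add (le_leadExp m ha) (le_leadExp m hb)
  · apply le_leadExp
    rw [mem_support_iff, coeff_mul_leadExp]
    exact mul_ne_zero (mem_support_iff.mp (leadExp_mem m hp))
      (mem_support_iff.mp (leadExp_mem m hq))

lemma leadExp_sub_lead [DecidableEq σ] {h : MvPolynomial σ ℂ} (hc : h.coeff (leadExp m h) = 1)
    (hp : h - monomial (leadExp m h) 1 ≠ 0) :
    m.toSyn (leadExp m (h - monomial (leadExp m h) 1)) < m.toSyn (leadExp m h) := by
  set p := h - monomial (leadExp m h) 1 with hpdef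
  have hmem := leadExp_mem m hp
  have hcoeffp : p.coeff (leadExp m p) ≠ 0 := mem_support_iff.mp hmem
  have hne : leadExp m p ≠ leadExp m h := by
    intro e
    apply hcoeffp
    rw [e, hpdef, MvPolynomial.coeff_sub, hc, MvPolynomial.coeff_monomial, if_pos rfl]
    ring
  have hd : leadExp m p ∈ h.support := by
    rw [mem_support_iff]
    intro h0
    apply hcoeffp
    rw [hpdef, MvPolynomial.coeff_sub, h0, MvPolynomial.coeff_monomial,
      if_neg (fun e => hne e.symm)]
    ring
  exact lt_of_le_of_ne (le_leadExp m hd) (fun e => hne (m.toSyn.injective e))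

end Aux

/-- Buchberger's first criterion: if the leading monomials of `f` and `g` (with
leading coefficients normalized to `1`) are relatively prime, i.e.
`lcm(T(f),T(g)) = T(f)·T(g)`, then the S-polynomial
`S(f,g) = (lcm/T(g))·g − (lcm/T(f))·f` reduces to zero modulo `{f,g}`: it lies in
the ideal `(f,g)` and admits a standard representation `S = a·f + b·g` in which
the leading monomials of `a·f` and `b·g` do not exceed that of `S(f,g)`. -/
theorem stmt6 {σ : Type*} (m : MonomialOrder σ) (f g S : MvPolynomial σ ℂ)
    (hf : f ≠ 0) (hg : g ≠ 0)
    (hfc : f.coeff (leadExp m f) = 1) (hgc : g.coeff (leadExp m g) = 1)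
    (hprime : leadExp m f ⊔ leadExp m g = leadExp m f + leadExp m g)
    (hS : S = monomial (leadExp m f ⊔ leadExp m g - leadExp m g) (1 : ℂ) * g -
      monomial (leadExp m f ⊔ leadExp m g - leadExp m f) (1 : ℂ) * f) :
    S ∈ Ideal.span {f, g} ∧
    ∃ a b : MvPolynomial σ ℂ,
      S = a * f + b * g ∧
      (a * f = 0 ∨ m.toSyn (leadExp m (a * f)) ≤ m.toSyn (leadExp m S)) ∧
      (b * g = 0 ∨ m.toSyn (leadExp m (b * g)) ≤ m.toSyn (leadExp m S)) := by
  classical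
  set Tf := leadExp m f with hTf
  set Tg := leadExp m g with hTg
  have hsub1 : Tf ⊔ Tg - Tg = Tf := by
    rw [hprime]; ext i; rw [Finsupp.tsub_apply, Finsupp.add_apply]; omega
  have hsub2 : Tf ⊔ Tg - Tf = Tg := by
    rw [hprime]; ext i; rw [Finsupp.tsub_apply, Finsupp.add_apply]; omega
  set f' := f - monomial Tf 1 with hf'
  set g' := g - monomial Tg 1 with hg'
  have hSeq : S = g' * f + (-f') * g := by
    rw [hS, hsub1, hsub2, hf', hg']; ring
  have hSd : S = g' * f - f' * g := by rw [hSeq]; ring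
  refine ⟨Ideal.mem_span_pair.mpr ⟨g', -f', hSeq.symm⟩, g', -f', hSeq, ?_⟩
  -- componentwise coprimality
  have hmin : ∀ i, Tf i = 0 ∨ Tg i = 0 := by
    intro i
    have := DFunLike.congr_fun hprime i
    rw [Finsupp.sup_apply, Finsupp.add_apply] at this
    rcases le_total (Tf i) (Tg i) with h | h
    · left; omega
    · right; omega
  have hkey : ∀ {α β : σ →₀ ℕ}, m.toSyn α < m.toSyn Tg → m.toSyn β < m.toSyn Tf →
      α + Tf ≠ β + Tg := by
    intro α β hα hβ heq
    have hle : Tg ≤ α := by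
      rw [Finsupp.le_def]
      intro i
      have := DFunLike.congr_fun heq i
      rw [Finsupp.add_apply, Finsupp.add_apply] at this
      rcases hmin i with h | h <;> omega
    exact absurd (m.toSyn_monotone hle) (not_le.mpr hα)
  by_cases hg0 : g' = 0
  · by_cases hf0 : f' = 0
    · exact ⟨Or.inl (by rw [hg0, zero_mul]), Or.inr (by rw [hf0, neg_zero, zero_mul, hSd, hf0, hg0]; simp)⟩
    · refine ⟨Or.inl (by rw [hg0, zero_mul]), Or.inr ?_⟩
      have hSe : S = (-f') * g := by rw [hSeq, hg0]; ring
      rw [hSe]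
  · by_cases hf0 : f' = 0
    · refine ⟨Or.inr ?_, Or.inl (by rw [hf0, neg_zero, zero_mul])⟩
      have hSe : S = g' * f := by rw [hSeq, hf0]; ring
      rw [hSe]
    · have hA : leadExp m (g' * f) = leadExp m g' + Tf := leadExp_mul m hg0 hf
      have hB : leadExp m (f' * g) = leadExp m f' + Tg := leadExp_mul m hf0 hg
      have hαlt : m.toSyn (leadExp m g') < m.toSyn Tg := leadExp_sub_lead m hgc hg0
      have hβlt : m.toSyn (leadExp m f') < m.toSyn Tf := leadExp_sub_lead m hfc hf0
      have hne : m.toSyn (leadExp m (g' * f)) ≠ m.toSyn (leadExp m (f' * g)) := by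
        rw [hA, hB]
        intro e
        exact hkey hαlt hβlt (m.toSyn.injective e)
      have hNeg : leadExp m ((-f') * g) = leadExp m (f' * g) := by
        rw [neg_mul, leadExp_neg]
      rcases hne.lt_or_gt with h | h
      · have hmemS : leadExp m (f' * g) ∈ S.support := by
          rw [mem_support_iff, hSd, MvPolynomial.coeff_sub]
          rw [coeff_eq_zero_of_lt m h, zero_sub, neg_ne_zero]
          exact mem_support_iff.mp (leadExp_mem m (mul_ne_zero hf0 hg))
        have hle2 : m.toSyn (leadExp m (f' * g)) ≤ m.toSyn (leadExp m S) :=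
          le_leadExp m hmemS
        exact ⟨Or.inr (le_trans h.le hle2), Or.inr (by rw [hNeg]; exact hle2)⟩
      · have hmemS : leadExp m (g' * f) ∈ S.support := by
          rw [mem_support_iff, hSd, MvPolynomial.coeff_sub]
          rw [coeff_eq_zero_of_lt m h, sub_zero]
          exact mem_support_iff.mp (leadExp_mem m (mul_ne_zero hg0 hf))
        have hle2 : m.toSyn (leadExp m (g' * f)) ≤ m.toSyn (leadExp m S) :=
          le_leadExp m hmemS
        exact ⟨Or.inr hle2, Or.inr (by rw [hNeg]; exact le_trans h.le hle2)⟩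
end

section
/- A monomial in the variables fⁱ[s], gⱼ[t] (1 ≤ i,j ≤ n, −N₁ ≤ s,t ≤ N₂, n ≥ 3) maps to a basis element of AQ = ℂ[fⁱ[s],gⱼ[t]]/(r[−2N₁],…,r[2N₂]) if and only if it is divisible by none of the monomials g₁[t]f¹[t] (−N₁ ≤ t ≤ N₂) and gₙ[t]fⁿ[t+1] (−N₁ ≤ t ≤ N₂−1); the images of such monomials form a ℂ-basis of AQ. -/
open MvPolynomial

/-- Index set `{k : ℤ | −N₁ ≤ k ≤ N₂}` for the loop modes. -/
abbrev QIdx (N₁ N₂ : ℕ) := {k : ℤ // k ∈ Finset.Icc (-(N₁ : ℤ)) (N₂ : ℤ)}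

/-- The quasimap relation `r[l] = Σ_{s+t=l} Σ_{i=1}^n fⁱ[s] gᵢ[t]` in the polynomial
ring on variables `fⁱ[s] = X (inl i, s)` and `gⱼ[t] = X (inr j, t)`. -/
noncomputable def qmRel (n N₁ N₂ : ℕ) (l : ℤ) :
    MvPolynomial ((Fin n ⊕ Fin n) × QIdx N₁ N₂) ℂ :=
  ∑ p : QIdx N₁ N₂, ∑ q : QIdx N₁ N₂,
    if (p : ℤ) + (q : ℤ) = l then
      ∑ i : Fin n, X (Sum.inl i, p) * X (Sum.inr i, q)
    else 0

/-- The ideal generated by the relations `r[l]`, `−2N₁ ≤ l ≤ 2N₂`. -/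
noncomputable def qmIdeal (n N₁ N₂ : ℕ) :
    Ideal (MvPolynomial ((Fin n ⊕ Fin n) × QIdx N₁ N₂) ℂ) :=
  Ideal.span {p | ∃ l ∈ Finset.Icc (-(2 * N₁ : ℤ)) (2 * N₂ : ℤ), p = qmRel n N₁ N₂ l}

namespace QMB

abbrev Vr (n N₁ N₂ : ℕ) := (Fin n ⊕ Fin n) × QIdx N₁ N₂
abbrev Mo (n N₁ N₂ : ℕ) := Vr n N₁ N₂ →₀ ℕ
abbrev Po (n N₁ N₂ : ℕ) := MvPolynomial (Vr n N₁ N₂) ℂ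
abbrev Kr (N₁ N₂ : ℕ) := QIdx (2*N₁) (2*N₂)

variable {n N₁ N₂ : ℕ}

def wv (n : ℕ) : Vr n N₁ N₂ → ℤ
  | (Sum.inl i, s) =>
      if (i:ℕ) = 0 then 1 - 2*(s:ℤ)^2
      else if (i:ℕ) = n-1 then -2*(s:ℤ)^2 + 2*(s:ℤ)
      else -2*(s:ℤ)^2 - 5
  | (Sum.inr i, t) =>
      if (i:ℕ) = 0 then -2*(t:ℤ)^2
      else if (i:ℕ) = n-1 then -2*(t:ℤ)^2 - 2*(t:ℤ)
      else -2*(t:ℤ)^2 - 5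

def Cb (N₁ N₂ : ℕ) : ℤ := 2*(max N₁ N₂ : ℤ)^2 + 2*(max N₁ N₂ : ℤ) + 5

lemma sq_le_sq' (s B : ℤ) (h1 : -B ≤ s) (h2 : s ≤ B) : s^2 ≤ B^2 := by nlinarith

lemma int_le_sq (d : ℤ) : d ≤ d^2 := by
  rcases le_or_gt d 0 with h | h
  · nlinarith
  · nlinarith

lemma one_le_sq {d : ℤ} (h : d ≠ 0) : 1 ≤ d^2 := by
  rcases lt_or_gt_of_ne h with h | h <;> nlinarith

lemma qidx_bounds (s : QIdx N₁ N₂) : -(N₁:ℤ) ≤ (s:ℤ) ∧ (s:ℤ) ≤ N₂ := by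
  have := s.2; rw [Finset.mem_Icc] at this; exact this

lemma wv_bound (v : Vr n N₁ N₂) : -(Cb N₁ N₂) ≤ wv n v := by
  obtain ⟨i | i, s⟩ := v <;>
  · have hb := qidx_bounds s
    have h1 : (N₁:ℤ) ≤ (max N₁ N₂ : ℤ) := by exact_mod_cast le_max_left N₁ N₂
    have h2 : (N₂:ℤ) ≤ (max N₁ N₂ : ℤ) := by exact_mod_cast le_max_right N₁ N₂
    have h0 : (0:ℤ) ≤ (max N₁ N₂ : ℤ) := by positivity
    have hsq : (s:ℤ)^2 ≤ (max N₁ N₂ : ℤ)^2 := sq_le_sq' _ _ (by omega) (by omega)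
    simp only [wv, Cb]
    split_ifs <;> nlinarith [hb.1, hb.2]

/-- additive "rank" of a monomial: nonnegative, additive, strictly decreasing
under reduction. -/
def ν (m : Mo n N₁ N₂) : ℤ := m.sum fun v e => (e:ℤ) * (Cb N₁ N₂ + wv n v)

lemma ν_nonneg (m : Mo n N₁ N₂) : 0 ≤ ν m := by
  apply Finset.sum_nonneg
  intro v _
  have := wv_bound (N₁ := N₁) (N₂ := N₂) v
  have : (0:ℤ) ≤ Cb N₁ N₂ + wv n v := by linarith
  positivity


/-- exponent of the monomial `fⁱ[p] gᵢ[q]`. -/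
noncomputable def E (i : Fin n) (p q : QIdx N₁ N₂) : Mo n N₁ N₂ :=
  Finsupp.single (Sum.inl i, p) 1 + Finsupp.single (Sum.inr i, q) 1

noncomputable def Ex (x : Fin n × QIdx N₁ N₂ × QIdx N₁ N₂) : Mo n N₁ N₂ := E x.1 x.2.1 x.2.2

/-- the index set of terms of the relation `r[l]`. -/
noncomputable def T (n N₁ N₂ : ℕ) (l : ℤ) : Finset (Fin n × QIdx N₁ N₂ × QIdx N₁ N₂) :=
  Finset.univ.filter (fun x => ((x.2.1 : ℤ) + (x.2.2 : ℤ) = l))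

variable (hn : 3 ≤ n)

/-- the leading term data of the relation `r[k]`. -/
def lead (k : Kr N₁ N₂) : Fin n × QIdx N₁ N₂ × QIdx N₁ N₂ :=
  if h : (k:ℤ) % 2 = 0 then
    (⟨0, by have := k; omega⟩,
     ⟨(k:ℤ)/2, by have := k.2; rw [Finset.mem_Icc] at this ⊢; push_cast at this ⊢; omega⟩,
     ⟨(k:ℤ)/2, by have := k.2; rw [Finset.mem_Icc] at this ⊢; push_cast at this ⊢; omega⟩)
  else
    (⟨n-1, by have := k; omega⟩,
     ⟨((k:ℤ)+1)/2, by have := k.2; rw [Finset.mem_Icc] at this ⊢; push_cast at this ⊢; omega⟩,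
     ⟨((k:ℤ)-1)/2, by have := k.2; rw [Finset.mem_Icc] at this ⊢; push_cast at this ⊢; omega⟩)

/-- the leading monomial exponent of `r[k]`. -/
noncomputable def ltm (k : Kr N₁ N₂) : Mo n N₁ N₂ := Ex (lead hn k)

/-- the non-leading terms of `r[k]`. -/
noncomputable def O (k : Kr N₁ N₂) : Finset (Fin n × QIdx N₁ N₂ × QIdx N₁ N₂) :=
  (T n N₁ N₂ (k:ℤ)).erase (lead hn k)

lemma lead_mem (k : Kr N₁ N₂) : lead hn k ∈ T n N₁ N₂ (k:ℤ) := by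
  rw [T, Finset.mem_filter]
  refine ⟨Finset.mem_univ _, ?_⟩
  rw [lead]
  split_ifs with h <;> simp only <;> omega

lemma ν_add (a b : Mo n N₁ N₂) : ν (a + b) = ν a + ν b := by
  rw [ν, ν, ν]
  apply Finsupp.sum_add_index' <;> intros <;> push_cast <;> ring

lemma ν_single (v : Vr n N₁ N₂) (e : ℕ) :
    ν (Finsupp.single v e) = (e:ℤ) * (Cb N₁ N₂ + wv n v) := by
  rw [ν]
  apply Finsupp.sum_single_index
  simp

lemma ν_E (i : Fin n) (p q : QIdx N₁ N₂) :
    ν (E i p q) = 2 * Cb N₁ N₂ + wv n (Sum.inl i, p) + wv n (Sum.inr i, q) := by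
  rw [E, ν_add, ν_single, ν_single]; ring

lemma qcoe (x : ℤ) (pf : x ∈ Finset.Icc (-(N₁:ℤ)) (N₂:ℤ)) :
    ((⟨x, pf⟩ : QIdx N₁ N₂) : ℤ) = x := rfl

/-- the key inequality: non-leading terms have strictly smaller weight. -/
lemma key (k : Kr N₁ N₂) {x : Fin n × QIdx N₁ N₂ × QIdx N₁ N₂} (hx : x ∈ O hn k) :
    ν (Ex x) < ν (ltm hn k) := by
  obtain ⟨i, p, q⟩ := x
  rw [O, Finset.mem_erase, T, Finset.mem_filter] at hx
  obtain ⟨hne, -, hsum⟩ := hx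
  simp only at hsum
  by_cases hpar : (k:ℤ) % 2 = 0
  · set u : ℤ := (k:ℤ)/2 with hu
    have hk2 : (k:ℤ) = 2*u := by omega
    have hmem : u ∈ Finset.Icc (-(N₁:ℤ)) (N₂:ℤ) := by
      have := k.2; rw [Finset.mem_Icc] at this ⊢; push_cast at this ⊢; omega
    have hlead : lead (N₁ := N₁) (N₂ := N₂) hn k =
        (⟨0, by omega⟩, ⟨u, hmem⟩, ⟨u, hmem⟩) := by
      rw [lead, dif_pos hpar]
    rw [ltm]; rw [hlead] at hne ⊢
    simp only [Ex]
    rw [ν_E, ν_E]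
    have e1 : wv n (Sum.inl (⟨0, by omega⟩ : Fin n), (⟨u, hmem⟩ : QIdx N₁ N₂)) = 1 - 2*u^2 := by
      simp [wv, qcoe]
    have e2 : wv n (Sum.inr (⟨0, by omega⟩ : Fin n), (⟨u, hmem⟩ : QIdx N₁ N₂)) = -2*u^2 := by
      simp [wv, qcoe]
    rw [e1, e2]
    rcases Nat.eq_zero_or_pos (i:ℕ) with hi | hi
    · have hiq : i = ⟨0, by omega⟩ := Fin.ext hi
      have hpu : (p:ℤ) ≠ u := by
        intro hpe
        exact hne (Prod.ext hiq (Prod.ext (Subtype.ext hpe)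
          (Subtype.ext (show (q:ℤ) = _ by push_cast; omega))))
      have e3 : wv n (Sum.inl i, p) = 1 - 2*(p:ℤ)^2 := by simp [wv, hi]
      have e4 : wv n (Sum.inr i, q) = -2*(q:ℤ)^2 := by simp [wv, hi]
      have hq : (q:ℤ) = 2*u - (p:ℤ) := by omega
      have hq2 : (q:ℤ)^2 = (2*u - (p:ℤ))^2 := by rw [hq]
      rw [e3, e4]
      nlinarith [one_le_sq (sub_ne_zero.mpr hpu), hq2]
    · by_cases hin : (i:ℕ) = n - 1
      · have e3 : wv n (Sum.inl i, p) = -2*(p:ℤ)^2 + 2*(p:ℤ) := by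
          simp only [wv]; rw [if_neg (by omega), if_pos hin]
        have e4 : wv n (Sum.inr i, q) = -2*(q:ℤ)^2 - 2*(q:ℤ) := by
          simp only [wv]; rw [if_neg (by omega), if_pos hin]
        have hq : (q:ℤ) = 2*u - (p:ℤ) := by omega
        have hq2 : (q:ℤ)^2 = (2*u - (p:ℤ))^2 := by rw [hq]
        rw [e3, e4]
        nlinarith [int_le_sq ((p:ℤ) - u), hq2, hq]
      · have e3 : wv n (Sum.inl i, p) = -2*(p:ℤ)^2 - 5 := by
          simp only [wv]; rw [if_neg (by omega), if_neg hin]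
        have e4 : wv n (Sum.inr i, q) = -2*(q:ℤ)^2 - 5 := by
          simp only [wv]; rw [if_neg (by omega), if_neg hin]
        have hq : (q:ℤ) = 2*u - (p:ℤ) := by omega
        have hq2 : (q:ℤ)^2 = (2*u - (p:ℤ))^2 := by rw [hq]
        rw [e3, e4]
        nlinarith [sq_nonneg ((p:ℤ) - u), hq2]
  · set u : ℤ := ((k:ℤ)-1)/2 with hu
    have hk2 : (k:ℤ) = 2*u+1 := by omega
    have hmem1 : u+1 ∈ Finset.Icc (-(N₁:ℤ)) (N₂:ℤ) := by
      have := k.2; rw [Finset.mem_Icc] at this ⊢; push_cast at this ⊢; omega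
    have hmem2 : u ∈ Finset.Icc (-(N₁:ℤ)) (N₂:ℤ) := by
      have := k.2; rw [Finset.mem_Icc] at this ⊢; push_cast at this ⊢; omega
    have hlead : lead (N₁ := N₁) (N₂ := N₂) hn k =
        (⟨n-1, by omega⟩, ⟨u+1, hmem1⟩, ⟨u, hmem2⟩) := by
      rw [lead, dif_neg hpar]
      exact Prod.ext rfl (Prod.ext
        (Subtype.ext (show ((k:ℤ)+1)/2 = u+1 by omega))
        (Subtype.ext (show ((k:ℤ)-1)/2 = u by omega)))
    rw [ltm]; rw [hlead] at hne ⊢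
    simp only [Ex]
    rw [ν_E, ν_E]
    have e1 : wv n (Sum.inl (⟨n-1, by omega⟩ : Fin n), (⟨u+1, hmem1⟩ : QIdx N₁ N₂))
        = -2*(u+1)^2 + 2*(u+1) := by
      simp only [wv, Fin.val_mk]; rw [if_neg (by omega)]; simp [qcoe]
    have e2 : wv n (Sum.inr (⟨n-1, by omega⟩ : Fin n), (⟨u, hmem2⟩ : QIdx N₁ N₂))
        = -2*u^2 - 2*u := by
      simp only [wv, Fin.val_mk]; rw [if_neg (by omega)]; simp [qcoe]
    rw [e1, e2]
    rcases Nat.eq_zero_or_pos (i:ℕ) with hi | hi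
    · have e3 : wv n (Sum.inl i, p) = 1 - 2*(p:ℤ)^2 := by simp [wv, hi]
      have e4 : wv n (Sum.inr i, q) = -2*(q:ℤ)^2 := by simp [wv, hi]
      have hq : (q:ℤ) = 2*u + 1 - (p:ℤ) := by omega
      have hq2 : (q:ℤ)^2 = (2*u + 1 - (p:ℤ))^2 := by rw [hq]
      rw [e3, e4]
      nlinarith [int_le_sq ((p:ℤ) - u), hq2, hq]
    · by_cases hin : (i:ℕ) = n - 1
      · have hiq : i = ⟨n-1, by omega⟩ := Fin.ext hin
        have hpu : (p:ℤ) ≠ u+1 := by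
          intro hpe
          exact hne (Prod.ext hiq (Prod.ext (Subtype.ext hpe)
          (Subtype.ext (show (q:ℤ) = _ by push_cast; omega))))
        have e3 : wv n (Sum.inl i, p) = -2*(p:ℤ)^2 + 2*(p:ℤ) := by
          simp only [wv]; rw [if_neg (by omega), if_pos hin]
        have e4 : wv n (Sum.inr i, q) = -2*(q:ℤ)^2 - 2*(q:ℤ) := by
          simp only [wv]; rw [if_neg (by omega), if_pos hin]
        have hq : (q:ℤ) = 2*u + 1 - (p:ℤ) := by omega
        have hq2 : (q:ℤ)^2 = (2*u + 1 - (p:ℤ))^2 := by rw [hq]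
        rw [e3, e4]
        nlinarith [one_le_sq (sub_ne_zero.mpr hpu), hq2, hq]
      · have e3 : wv n (Sum.inl i, p) = -2*(p:ℤ)^2 - 5 := by
          simp only [wv]; rw [if_neg (by omega), if_neg hin]
        have e4 : wv n (Sum.inr i, q) = -2*(q:ℤ)^2 - 5 := by
          simp only [wv]; rw [if_neg (by omega), if_neg hin]
        have hq : (q:ℤ) = 2*u + 1 - (p:ℤ) := by omega
        have hq2 : (q:ℤ)^2 = (2*u + 1 - (p:ℤ))^2 := by rw [hq]
        rw [e3, e4]
        nlinarith [sq_nonneg ((p:ℤ) - u), hq2, hq]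

lemma E_ne_zero {i : Fin n} {p q : QIdx N₁ N₂} {v : Vr n N₁ N₂} (h : E i p q v ≠ 0) :
    v = (Sum.inl i, p) ∨ v = (Sum.inr i, q) := by
  rw [E, Finsupp.add_apply, Finsupp.single_apply, Finsupp.single_apply] at h
  split_ifs at h with h1 h2 h3
  · exact Or.inl h1.symm
  · exact Or.inl h1.symm
  · exact Or.inr h3.symm
  · exact absurd rfl h

lemma lead_val (k : Kr N₁ N₂) :
    (((lead (N₁:=N₁) (N₂:=N₂) hn k).1 : ℕ) = if (k:ℤ)%2 = 0 then 0 else n-1) ∧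
    (((lead (N₁:=N₁) (N₂:=N₂) hn k).2.1 : ℤ) = if (k:ℤ)%2 = 0 then (k:ℤ)/2 else ((k:ℤ)+1)/2) ∧
    (((lead (N₁:=N₁) (N₂:=N₂) hn k).2.2 : ℤ) = if (k:ℤ)%2 = 0 then (k:ℤ)/2 else ((k:ℤ)-1)/2) := by
  rw [lead]; split_ifs with h <;> exact ⟨rfl, rfl, rfl⟩

lemma ltm_disj {k k' : Kr N₁ N₂} (hkk : k ≠ k') (v : Vr n N₁ N₂) :
    ltm hn k v = 0 ∨ ltm hn k' v = 0 := by
  by_contra hc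
  push_neg at hc
  obtain ⟨h1, h2⟩ := hc
  have hk : (k:ℤ) ≠ (k':ℤ) := fun h => hkk (Subtype.ext h)
  rw [ltm, Ex] at h1 h2
  have d1 := E_ne_zero h1
  have d2 := E_ne_zero h2
  obtain ⟨a1, b1, c1⟩ := lead_val (N₁:=N₁) (N₂:=N₂) hn k
  obtain ⟨a2, b2, c2⟩ := lead_val (N₁:=N₁) (N₂:=N₂) hn k'
  rcases d1 with rfl | rfl <;> rcases d2 with h | h
  · rw [Prod.mk.injEq] at h
    have hAv := congrArg Fin.val (Sum.inl.inj h.1)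
    have hBv := congrArg (fun x : QIdx N₁ N₂ => (x:ℤ)) h.2
    rw [a1, a2] at hAv
    rw [b1, b2] at hBv
    split_ifs at hAv hBv <;> omega
  · rw [Prod.mk.injEq] at h
    exact absurd h.1 (by simp)
  · rw [Prod.mk.injEq] at h
    exact absurd h.1 (by simp)
  · rw [Prod.mk.injEq] at h
    have hAv := congrArg Fin.val (Sum.inr.inj h.1)
    have hBv := congrArg (fun x : QIdx N₁ N₂ => (x:ℤ)) h.2
    rw [a1, a2] at hAv
    rw [c1, c2] at hBv
    split_ifs at hAv hBv <;> omega

lemma O_nonempty (k : Kr N₁ N₂) : (O (N₁:=N₁) (N₂:=N₂) hn k).Nonempty := by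
  obtain ⟨a1, -, -⟩ := lead_val (N₁:=N₁) (N₂:=N₂) hn k
  refine ⟨(⟨1, by omega⟩, (lead hn k).2.1, (lead hn k).2.2), ?_⟩
  rw [O, Finset.mem_erase]
  constructor
  · intro h
    have := congrArg (fun x => ((x.1 : Fin n) : ℕ)) h
    simp only at this
    rw [a1] at this
    split_ifs at this <;> omega
  · have := lead_mem (N₁:=N₁) (N₂:=N₂) hn k
    rw [T, Finset.mem_filter] at this ⊢
    exact ⟨Finset.mem_univ _, this.2⟩

def μ (m : Mo n N₁ N₂) : ℕ := (ν m).toNat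

lemma μ_lt {k : Kr N₁ N₂} {m : Mo n N₁ N₂} (h : ltm hn k ≤ m)
    {x : Fin n × QIdx N₁ N₂ × QIdx N₁ N₂} (hx : x ∈ O hn k) :
    μ (m - ltm hn k + Ex x) < μ m := by
  have h1 : ν (m - ltm hn k + Ex x) = ν (m - ltm hn k) + ν (Ex x) := ν_add _ _
  have h2 : ν m = ν (m - ltm hn k) + ν (ltm hn k) := by
    conv_lhs => rw [← tsub_add_cancel_of_le h]
    exact ν_add _ _
  have h3 := key hn k hx
  have h4 := ν_nonneg (m - ltm hn k + Ex x)
  rw [μ, μ]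
  omega

open Classical in
noncomputable def nfAux (hn : 3 ≤ n) : ℕ → Mo n N₁ N₂ → Po n N₁ N₂
  | 0, m => monomial m 1
  | (N+1), m =>
    if h : ∃ k : Kr N₁ N₂, ltm hn k ≤ m then
      - ∑ x ∈ O hn h.choose, nfAux hn N (m - ltm hn h.choose + Ex x)
    else monomial m 1

lemma nfAux_eq : ∀ (N : ℕ) (m : Mo n N₁ N₂), μ m ≤ N →
    ∀ a b, μ m < a → μ m < b → nfAux hn a m = nfAux hn b m := by
  intro N
  induction N with
  | zero =>
    intro m hm a b ha hb
    obtain ⟨a', rfl⟩ : ∃ a', a = a'+1 := ⟨a-1, by omega⟩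
    obtain ⟨b', rfl⟩ : ∃ b', b = b'+1 := ⟨b-1, by omega⟩
    by_cases h : ∃ k : Kr N₁ N₂, ltm hn k ≤ m
    · exfalso
      obtain ⟨x, hx⟩ := O_nonempty (N₁:=N₁) (N₂:=N₂) hn h.choose
      have := μ_lt hn h.choose_spec hx
      omega
    · simp only [nfAux, dif_neg h]
  | succ N ih =>
    intro m hm a b ha hb
    obtain ⟨a', rfl⟩ : ∃ a', a = a'+1 := ⟨a-1, by omega⟩
    obtain ⟨b', rfl⟩ : ∃ b', b = b'+1 := ⟨b-1, by omega⟩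
    by_cases h : ∃ k : Kr N₁ N₂, ltm hn k ≤ m
    · simp only [nfAux, dif_pos h]
      congr 1
      apply Finset.sum_congr rfl
      intro x hx
      have hμ := μ_lt hn h.choose_spec hx
      exact ih _ (by omega) a' b' (by omega) (by omega)
    · simp only [nfAux, dif_neg h]

noncomputable def nf (m : Mo n N₁ N₂) : Po n N₁ N₂ := nfAux hn (μ m + 1) m

lemma nf_irred {m : Mo n N₁ N₂} (h : ¬ ∃ k : Kr N₁ N₂, ltm hn k ≤ m) :
    nf hn m = monomial m 1 := by
  rw [nf]
  simp only [nfAux, dif_neg h]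

lemma nf_choose {m : Mo n N₁ N₂} (h : ∃ k : Kr N₁ N₂, ltm hn k ≤ m) :
    nf hn m = - ∑ x ∈ O hn h.choose, nf hn (m - ltm hn h.choose + Ex x) := by
  rw [nf]
  simp only [nfAux, dif_pos h]
  congr 1
  apply Finset.sum_congr rfl
  intro x hx
  have hμ := μ_lt hn h.choose_spec hx
  exact nfAux_eq hn (μ (m - ltm hn h.choose + Ex x)) _ le_rfl _ _ (by omega) (by omega)

/-- The diamond lemma: the normal form can be computed by starting with *any*
applicable reduction, not just the chosen one. -/
lemma nf_red : ∀ (N : ℕ) (m : Mo n N₁ N₂), μ m ≤ N → ∀ k : Kr N₁ N₂, ltm hn k ≤ m →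
    nf hn m = - ∑ x ∈ O hn k, nf hn (m - ltm hn k + Ex x) := by
  intro N
  induction N with
  | zero =>
    intro m hm k hk
    exfalso
    obtain ⟨x, hx⟩ := O_nonempty (N₁:=N₁) (N₂:=N₂) hn k
    have := μ_lt hn hk hx
    omega
  | succ N ih =>
    intro m hm k hk
    have hex : ∃ k : Kr N₁ N₂, ltm hn k ≤ m := ⟨k, hk⟩
    have hk₀le : ltm hn hex.choose ≤ m := hex.choose_spec
    set k₀ := hex.choose with hk₀def
    rw [nf_choose hn hex]
    by_cases hkk : k₀ = k
    · rw [← hk₀def, hkk]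
    · have hle2 : ∀ v, ltm hn k₀ v + ltm hn k v ≤ m v := by
        intro v
        have l1 : ltm hn k₀ v ≤ m v := Finsupp.le_def.mp hk₀le v
        have l2 : ltm hn k v ≤ m v := Finsupp.le_def.mp hk v
        rcases ltm_disj hn hkk v with h0 | h0 <;> omega
      have harg1 : ∀ (x y : Fin n × QIdx N₁ N₂ × QIdx N₁ N₂),
          (m - ltm hn k₀ + Ex x) - ltm hn k + Ex y
            = m - (ltm hn k₀ + ltm hn k) + (Ex x + Ex y) := by
        intro x y
        ext v
        simp only [Finsupp.add_apply, Finsupp.tsub_apply]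
        have := hle2 v
        omega
      have harg2 : ∀ (x y : Fin n × QIdx N₁ N₂ × QIdx N₁ N₂),
          (m - ltm hn k + Ex y) - ltm hn k₀ + Ex x
            = m - (ltm hn k₀ + ltm hn k) + (Ex x + Ex y) := by
        intro x y
        ext v
        simp only [Finsupp.add_apply, Finsupp.tsub_apply]
        have := hle2 v
        omega
      have hle1x : ∀ (x : Fin n × QIdx N₁ N₂ × QIdx N₁ N₂), ltm hn k ≤ m - ltm hn k₀ + Ex x := by
        intro x
        rw [Finsupp.le_def]
        intro v
        simp only [Finsupp.add_apply, Finsupp.tsub_apply]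
        have := hle2 v
        omega
      have hle2y : ∀ (y : Fin n × QIdx N₁ N₂ × QIdx N₁ N₂), ltm hn k₀ ≤ m - ltm hn k + Ex y := by
        intro y
        rw [Finsupp.le_def]
        intro v
        simp only [Finsupp.add_apply, Finsupp.tsub_apply]
        have := hle2 v
        omega
      calc - ∑ x ∈ O hn k₀, nf hn (m - ltm hn k₀ + Ex x)
          = - ∑ x ∈ O hn k₀, - ∑ y ∈ O hn k,
              nf hn (m - (ltm hn k₀ + ltm hn k) + (Ex x + Ex y)) := by
            congr 1
            apply Finset.sum_congr rfl
            intro x hx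
            have hμx := μ_lt hn hk₀le hx
            rw [ih _ (by omega) k (hle1x x)]
            congr 1
            apply Finset.sum_congr rfl
            intro y hy
            rw [harg1]
        _ = ∑ x ∈ O hn k₀, ∑ y ∈ O hn k,
              nf hn (m - (ltm hn k₀ + ltm hn k) + (Ex x + Ex y)) := by
            rw [Finset.sum_neg_distrib, neg_neg]
        _ = ∑ y ∈ O hn k, ∑ x ∈ O hn k₀,
              nf hn (m - (ltm hn k₀ + ltm hn k) + (Ex x + Ex y)) := Finset.sum_comm
        _ = - ∑ y ∈ O hn k, nf hn (m - ltm hn k + Ex y) := by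
            rw [← neg_neg (∑ y ∈ O hn k, ∑ x ∈ O hn k₀,
              nf hn (m - (ltm hn k₀ + ltm hn k) + (Ex x + Ex y)))]
            congr 1
            rw [← Finset.sum_neg_distrib]
            apply Finset.sum_congr rfl
            intro y hy
            have hμy := μ_lt hn hk hy
            rw [ih _ (by omega) k₀ (hle2y y)]
            congr 1
            apply Finset.sum_congr rfl
            intro x hx
            rw [harg2]

lemma rel_eq (l : ℤ) :
    (∑ x ∈ T n N₁ N₂ l, (monomial (Ex x) (1:ℂ) : Po n N₁ N₂)) = qmRel n N₁ N₂ l := by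
  have hXX : ∀ (i : Fin n) (p q : QIdx N₁ N₂),
      (X (Sum.inl i, p) * X (Sum.inr i, q) : Po n N₁ N₂) = monomial (E i p q) 1 := by
    intro i p q
    rw [E, X, X, monomial_mul, one_mul]
  rw [qmRel]
  simp_rw [hXX]
  rw [T, Finset.sum_filter, Fintype.sum_prod_type]
  simp_rw [Fintype.sum_prod_type]
  rw [Finset.sum_comm]
  apply Finset.sum_congr rfl
  intro p _
  rw [Finset.sum_comm]
  apply Finset.sum_congr rfl
  intro q _
  by_cases h : (p:ℤ) + (q:ℤ) = l
  · simp only [h, if_true, Ex]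
  · simp only [h, if_false, Ex, Finset.sum_const_zero]

lemma monomial_mul_rel (c : Mo n N₁ N₂) (k : Kr N₁ N₂) :
    (monomial c (1:ℂ) : Po n N₁ N₂) * qmRel n N₁ N₂ (k:ℤ)
      = monomial (c + ltm hn k) 1 + ∑ x ∈ O hn k, monomial (c + Ex x) 1 := by
  rw [← rel_eq, Finset.mul_sum]
  simp_rw [monomial_mul, one_mul]
  rw [← Finset.add_sum_erase _ _ (lead_mem (N₁:=N₁) (N₂:=N₂) hn k), O, ltm]

lemma gen_mem (k : Kr N₁ N₂) : qmRel n N₁ N₂ (k:ℤ) ∈ qmIdeal n N₁ N₂ := by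
  apply Ideal.subset_span
  refine ⟨(k:ℤ), ?_, rfl⟩
  have := k.2
  rw [Finset.mem_Icc] at this ⊢
  push_cast at this ⊢
  omega

lemma sub_nf_mem : ∀ (N : ℕ) (m : Mo n N₁ N₂), μ m ≤ N →
    monomial m (1:ℂ) - nf hn m ∈ qmIdeal n N₁ N₂ := by
  intro N
  induction N with
  | zero =>
    intro m hm
    by_cases h : ∃ k : Kr N₁ N₂, ltm hn k ≤ m
    · exfalso
      obtain ⟨k, hk⟩ := h
      obtain ⟨x, hx⟩ := O_nonempty (N₁:=N₁) (N₂:=N₂) hn k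
      have := μ_lt hn hk hx
      omega
    · rw [nf_irred hn h, sub_self]
      exact zero_mem _
  | succ N ih =>
    intro m hm
    by_cases h : ∃ k : Kr N₁ N₂, ltm hn k ≤ m
    · have hspec : ltm hn h.choose ≤ m := h.choose_spec
      have heq : monomial m (1:ℂ) - nf hn m
          = (monomial (m - ltm hn h.choose) 1) * qmRel n N₁ N₂ (h.choose : ℤ)
            - ∑ x ∈ O hn h.choose,
                (monomial (m - ltm hn h.choose + Ex x) 1
                  - nf hn (m - ltm hn h.choose + Ex x)) := by
        rw [nf_choose hn h, monomial_mul_rel hn, tsub_add_cancel_of_le hspec,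
          Finset.sum_sub_distrib]
        ring
      rw [heq]
      apply sub_mem
      · exact Ideal.mul_mem_left _ _ (gen_mem h.choose)
      · apply Submodule.sum_mem
        intro x hx
        have := μ_lt hn hspec hx
        exact ih _ (by omega)
    · rw [nf_irred hn h, sub_self]
      exact zero_mem _

/-- the normal-form linear map. -/
noncomputable def NF : Po n N₁ N₂ →ₗ[ℂ] Po n N₁ N₂ :=
  (MvPolynomial.basisMonomials _ ℂ).constr ℂ (nf hn)

lemma NF_monomial (m : Mo n N₁ N₂) : NF hn (monomial m 1) = nf hn m := by
  have h1 : (MvPolynomial.basisMonomials (Vr n N₁ N₂) ℂ) m = monomial m 1 := by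
    rw [MvPolynomial.coe_basisMonomials]
  rw [NF, ← h1]
  exact Module.Basis.constr_basis _ ℂ _ m

lemma NF_monomial' (m : Mo n N₁ N₂) (a : ℂ) : NF hn (monomial m a) = a • nf hn m := by
  have : (monomial m a : Po n N₁ N₂) = a • monomial m 1 := by
    rw [smul_monomial, smul_eq_mul, mul_one]
  rw [this, map_smul, NF_monomial]

lemma NF_mul_rel (c : Mo n N₁ N₂) (k : Kr N₁ N₂) :
    NF hn ((monomial c 1 : Po n N₁ N₂) * qmRel n N₁ N₂ (k:ℤ)) = 0 := by
  rw [monomial_mul_rel hn, map_add, map_sum]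
  simp_rw [NF_monomial hn]
  have hle : ltm hn k ≤ c + ltm hn k := le_add_self
  rw [nf_red hn (μ (c + ltm hn k)) _ le_rfl k hle]
  have harg : ∀ x, c + ltm hn k - ltm hn k + Ex x = c + Ex x := by
    intro x
    rw [add_tsub_cancel_right]
  simp_rw [harg]
  rw [neg_add_cancel]

/-- the ℂ-span of monomial multiples of the relations. -/
noncomputable def Jmod (n N₁ N₂ : ℕ) : Submodule ℂ (Po n N₁ N₂) :=
  Submodule.span ℂ {x | ∃ (c : Mo n N₁ N₂) (a : ℂ) (k : Kr N₁ N₂),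
    x = monomial c a * qmRel n N₁ N₂ (k:ℤ)}

lemma mul_rel_mem_J (p : Po n N₁ N₂) (k : Kr N₁ N₂) :
    p * qmRel n N₁ N₂ (k:ℤ) ∈ Jmod n N₁ N₂ := by
  induction p using MvPolynomial.induction_on' with
  | monomial u a => exact Submodule.subset_span ⟨u, a, k, rfl⟩
  | add p q hp hq =>
    rw [add_mul]
    exact add_mem hp hq

lemma J_mul_closed {x : Po n N₁ N₂} (hx : x ∈ Jmod n N₁ N₂) (r : Po n N₁ N₂) :
    r * x ∈ Jmod n N₁ N₂ := by
  induction hx using Submodule.span_induction with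
  | mem y hy =>
    obtain ⟨c, a, k, rfl⟩ := hy
    rw [← mul_assoc]
    exact mul_rel_mem_J _ k
  | zero => rw [mul_zero]; exact zero_mem _
  | add y z _ _ hy hz => rw [mul_add]; exact add_mem hy hz
  | smul a y _ hy => rw [mul_smul_comm]; exact Submodule.smul_mem _ _ hy

lemma ideal_le_J {p : Po n N₁ N₂} (hp : p ∈ qmIdeal n N₁ N₂) : p ∈ Jmod n N₁ N₂ := by
  induction hp using Submodule.span_induction with
  | mem y hy =>
    obtain ⟨l, hl, rfl⟩ := hy
    have hlk : l ∈ Finset.Icc (-((2*N₁ : ℕ):ℤ)) ((2*N₂ : ℕ):ℤ) := by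
      rw [Finset.mem_Icc] at hl ⊢
      push_cast at hl ⊢
      omega
    have : qmRel n N₁ N₂ l = monomial 0 1 * qmRel n N₁ N₂ ((⟨l, hlk⟩ : Kr N₁ N₂):ℤ) := by
      rw [monomial_zero', C_1, one_mul]
    rw [this]
    exact Submodule.subset_span ⟨0, 1, ⟨l, hlk⟩, rfl⟩
  | zero => exact zero_mem _
  | add y z _ _ hy hz => exact add_mem hy hz
  | smul a y _ hy => exact J_mul_closed hy a

lemma NF_J {p : Po n N₁ N₂} (hJ : p ∈ Jmod n N₁ N₂) : NF hn p = 0 := by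
  induction hJ using Submodule.span_induction with
  | mem y hy =>
    obtain ⟨c, a, k, rfl⟩ := hy
    have : (monomial c a : Po n N₁ N₂) = a • monomial c 1 := by
      rw [smul_monomial, smul_eq_mul, mul_one]
    rw [this, smul_mul_assoc, map_smul, NF_mul_rel hn, smul_zero]
  | zero => exact map_zero _
  | add y z _ _ hy hz => rw [map_add, hy, hz, add_zero]
  | smul a y _ hy => rw [map_smul, hy, smul_zero]

lemma NF_ideal {p : Po n N₁ N₂} (hp : p ∈ qmIdeal n N₁ N₂) : NF hn p = 0 :=
  NF_J hn (ideal_le_J hp)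

lemma sub_NF_mem (p : Po n N₁ N₂) : p - NF hn p ∈ qmIdeal n N₁ N₂ := by
  induction p using MvPolynomial.induction_on' with
  | monomial u a =>
    rw [NF_monomial' hn]
    have : (monomial u a : Po n N₁ N₂) - a • nf hn u
        = a • (monomial u 1 - nf hn u) := by
      rw [smul_sub]
      congr 1
      rw [smul_monomial, smul_eq_mul, mul_one]
    rw [this, smul_eq_C_mul]
    exact Ideal.mul_mem_left _ _ (sub_nf_mem hn (μ u) u le_rfl)
  | add p q hp hq =>
    rw [map_add]
    have : p + q - (NF hn p + NF hn q) = (p - NF hn p) + (q - NF hn q) := by ring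
    rw [this]
    exact add_mem hp hq

/-- the ℂ-span of the standard monomials. -/
noncomputable def stdSpan : Submodule ℂ (Po n N₁ N₂) :=
  Submodule.span ℂ {x | ∃ d : Mo n N₁ N₂,
    (¬ ∃ k : Kr N₁ N₂, ltm hn k ≤ d) ∧ x = monomial d 1}

lemma nf_mem_stdSpan : ∀ (N : ℕ) (m : Mo n N₁ N₂), μ m ≤ N →
    nf hn m ∈ stdSpan hn := by
  intro N
  induction N with
  | zero =>
    intro m hm
    by_cases h : ∃ k : Kr N₁ N₂, ltm hn k ≤ m
    · exfalso
      obtain ⟨k, hk⟩ := h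
      obtain ⟨x, hx⟩ := O_nonempty (N₁:=N₁) (N₂:=N₂) hn k
      have := μ_lt hn hk hx
      omega
    · rw [nf_irred hn h]
      exact Submodule.subset_span ⟨m, h, rfl⟩
  | succ N ih =>
    intro m hm
    by_cases h : ∃ k : Kr N₁ N₂, ltm hn k ≤ m
    · rw [nf_choose hn h]
      apply neg_mem
      apply Submodule.sum_mem
      intro x hx
      have := μ_lt hn h.choose_spec hx
      exact ih _ (by omega)
    · rw [nf_irred hn h]
      exact Submodule.subset_span ⟨m, h, rfl⟩

lemma E_le_iff {i : Fin n} {p q : QIdx N₁ N₂} {d : Mo n N₁ N₂} :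
    E i p q ≤ d ↔ 1 ≤ d (Sum.inl i, p) ∧ 1 ≤ d (Sum.inr i, q) := by
  have e1 : E i p q (Sum.inl i, p) = 1 := by
    simp [E, Finsupp.single_apply]
  have e2 : E i p q (Sum.inr i, q) = 1 := by
    simp [E, Finsupp.single_apply]
  constructor
  · intro h
    exact ⟨e1 ▸ Finsupp.le_def.mp h _, e2 ▸ Finsupp.le_def.mp h _⟩
  · rintro ⟨h1, h2⟩
    rw [Finsupp.le_def]
    intro v
    by_cases hv1 : v = (Sum.inl i, p)
    · subst hv1; rw [e1]; exact h1
    by_cases hv2 : v = (Sum.inr i, q)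
    · subst hv2; rw [e2]; exact h2
    have h0 : E i p q v = 0 := by
      by_contra hne
      rcases E_ne_zero hne with h | h
      · exact hv1 h
      · exact hv2 h
    rw [h0]
    exact Nat.zero_le _

lemma std_iff (d : Mo n N₁ N₂) :
    ((∀ k : QIdx N₁ N₂,
        ¬ (1 ≤ d (Sum.inr ⟨0, by have := d; omega⟩, k) ∧ 1 ≤ d (Sum.inl ⟨0, by have := d; omega⟩, k))) ∧
      (∀ k k' : QIdx N₁ N₂, (k' : ℤ) = (k : ℤ) + 1 →
        ¬ (1 ≤ d (Sum.inr ⟨n - 1, by have := d; omega⟩, k) ∧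
           1 ≤ d (Sum.inl ⟨n - 1, by have := d; omega⟩, k'))))
    ↔ ¬ ∃ k : Kr N₁ N₂, ltm hn k ≤ d := by
  constructor
  · rintro ⟨P1, P2⟩ ⟨k, hk⟩
    by_cases hpar : (k:ℤ) % 2 = 0
    · have hmem : (k:ℤ)/2 ∈ Finset.Icc (-(N₁:ℤ)) (N₂:ℤ) := by
        have := k.2; rw [Finset.mem_Icc] at this ⊢; push_cast at this ⊢; omega
      have hlead : lead (N₁:=N₁) (N₂:=N₂) hn k =
          (⟨0, by omega⟩, ⟨(k:ℤ)/2, hmem⟩, ⟨(k:ℤ)/2, hmem⟩) := by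
        rw [lead, dif_pos hpar]
      rw [ltm, hlead] at hk
      simp only [Ex] at hk
      rw [E_le_iff] at hk
      exact P1 ⟨(k:ℤ)/2, hmem⟩ ⟨hk.2, hk.1⟩
    · have hmem1 : ((k:ℤ)+1)/2 ∈ Finset.Icc (-(N₁:ℤ)) (N₂:ℤ) := by
        have := k.2; rw [Finset.mem_Icc] at this ⊢; push_cast at this ⊢; omega
      have hmem2 : ((k:ℤ)-1)/2 ∈ Finset.Icc (-(N₁:ℤ)) (N₂:ℤ) := by
        have := k.2; rw [Finset.mem_Icc] at this ⊢; push_cast at this ⊢; omega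
      have hlead : lead (N₁:=N₁) (N₂:=N₂) hn k =
          (⟨n-1, by omega⟩, ⟨((k:ℤ)+1)/2, hmem1⟩, ⟨((k:ℤ)-1)/2, hmem2⟩) := by
        rw [lead, dif_neg hpar]
      rw [ltm, hlead] at hk
      simp only [Ex] at hk
      rw [E_le_iff] at hk
      exact P2 ⟨((k:ℤ)-1)/2, hmem2⟩ ⟨((k:ℤ)+1)/2, hmem1⟩ (show ((k:ℤ)+1)/2 = ((k:ℤ)-1)/2 + 1 by omega)
        ⟨hk.2, hk.1⟩
  · intro h
    constructor
    · rintro t ⟨hg, hf⟩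
      apply h
      have hmemk : 2*(t:ℤ) ∈ Finset.Icc (-((2*N₁:ℕ):ℤ)) ((2*N₂:ℕ):ℤ) := by
        have := t.2; rw [Finset.mem_Icc] at this ⊢; push_cast at this ⊢; omega
      refine ⟨⟨2*(t:ℤ), hmemk⟩, ?_⟩
      have hlead : lead (N₁:=N₁) (N₂:=N₂) hn ⟨2*(t:ℤ), hmemk⟩ = (⟨0, by omega⟩, t, t) := by
        rw [lead, dif_pos (show (((⟨2*(t:ℤ), hmemk⟩ : Kr N₁ N₂)):ℤ) % 2 = 0 by
          rw [qcoe]; omega)]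
        exact Prod.ext rfl (Prod.ext
          (Subtype.ext (show (2*(t:ℤ))/2 = (t:ℤ) by omega))
          (Subtype.ext (show (2*(t:ℤ))/2 = (t:ℤ) by omega)))
      rw [ltm, hlead]
      simp only [Ex]
      rw [E_le_iff]
      exact ⟨hf, hg⟩
    · rintro t t' ht ⟨hg, hf⟩
      apply h
      have hmemk : 2*(t:ℤ)+1 ∈ Finset.Icc (-((2*N₁:ℕ):ℤ)) ((2*N₂:ℕ):ℤ) := by
        have h1 := t.2
        have h2 := t'.2
        rw [Finset.mem_Icc] at h1 h2 ⊢
        push_cast at h1 h2 ⊢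
        omega
      refine ⟨⟨2*(t:ℤ)+1, hmemk⟩, ?_⟩
      have hlead : lead (N₁:=N₁) (N₂:=N₂) hn ⟨2*(t:ℤ)+1, hmemk⟩ = (⟨n-1, by omega⟩, t', t) := by
        rw [lead, dif_neg (show ¬((((⟨2*(t:ℤ)+1, hmemk⟩ : Kr N₁ N₂)):ℤ) % 2 = 0) by
          rw [qcoe]; omega)]
        exact Prod.ext rfl (Prod.ext
          (Subtype.ext (show (2*(t:ℤ)+1+1)/2 = (t':ℤ) by omega))
          (Subtype.ext (show (2*(t:ℤ)+1-1)/2 = (t:ℤ) by omega)))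
      rw [ltm, hlead]
      simp only [Ex]
      rw [E_le_iff]
      exact ⟨hf, hg⟩

lemma NF_mem_stdSpan (p : Po n N₁ N₂) : NF hn p ∈ stdSpan hn := by
  induction p using MvPolynomial.induction_on' with
  | monomial u a =>
    rw [NF_monomial' hn]
    exact Submodule.smul_mem _ _ (nf_mem_stdSpan hn (μ u) u le_rfl)
  | add p q hp hq =>
    rw [map_add]
    exact add_mem hp hq

end QMB

/-- Straightened-law basis for quasimaps to an even quadric, `n ≥ 3`: the images in
`AQ = ℂ[fⁱ[s],gⱼ[t]]/(r[−2N₁],…,r[2N₂])` of exactly those monomials divisible by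
none of `g₁[t]f¹[t]` (`−N₁ ≤ t ≤ N₂`) and `gₙ[t]fⁿ[t+1]` (`−N₁ ≤ t ≤ N₂−1`)
form a `ℂ`-basis of `AQ`. -/
theorem stmt8 (n N₁ N₂ : ℕ) (hn : 3 ≤ n) :
    LinearIndependent ℂ
      (fun d : {d : ((Fin n ⊕ Fin n) × QIdx N₁ N₂) →₀ ℕ //
          (∀ k : QIdx N₁ N₂,
            ¬ (1 ≤ d (Sum.inr ⟨0, by omega⟩, k) ∧ 1 ≤ d (Sum.inl ⟨0, by omega⟩, k))) ∧
          (∀ k k' : QIdx N₁ N₂, (k' : ℤ) = (k : ℤ) + 1 →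
            ¬ (1 ≤ d (Sum.inr ⟨n - 1, by omega⟩, k) ∧
               1 ≤ d (Sum.inl ⟨n - 1, by omega⟩, k')))} =>
        Ideal.Quotient.mk (qmIdeal n N₁ N₂) (monomial d.1 (1 : ℂ))) ∧
    Submodule.span ℂ
      (Set.range (fun d : {d : ((Fin n ⊕ Fin n) × QIdx N₁ N₂) →₀ ℕ //
          (∀ k : QIdx N₁ N₂,
            ¬ (1 ≤ d (Sum.inr ⟨0, by omega⟩, k) ∧ 1 ≤ d (Sum.inl ⟨0, by omega⟩, k))) ∧
          (∀ k k' : QIdx N₁ N₂, (k' : ℤ) = (k : ℤ) + 1 →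
            ¬ (1 ≤ d (Sum.inr ⟨n - 1, by omega⟩, k) ∧
               1 ≤ d (Sum.inl ⟨n - 1, by omega⟩, k')))} =>
        Ideal.Quotient.mk (qmIdeal n N₁ N₂) (monomial d.1 (1 : ℂ)))) = ⊤ := by
  classical
  set I := qmIdeal n N₁ N₂ with hI
  set L := (Ideal.Quotient.mkₐ ℂ I).toLinearMap with hL
  have hLmk : ∀ x : QMB.Po n N₁ N₂, L x = Ideal.Quotient.mk I x := fun x => rfl
  constructor
  · rw [linearIndependent_iff]
    intro l hl
    set monfam := fun d : {d : ((Fin n ⊕ Fin n) × QIdx N₁ N₂) →₀ ℕ //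
          (∀ k : QIdx N₁ N₂,
            ¬ (1 ≤ d (Sum.inr ⟨0, by omega⟩, k) ∧ 1 ≤ d (Sum.inl ⟨0, by omega⟩, k))) ∧
          (∀ k k' : QIdx N₁ N₂, (k' : ℤ) = (k : ℤ) + 1 →
            ¬ (1 ≤ d (Sum.inr ⟨n - 1, by omega⟩, k) ∧
               1 ≤ d (Sum.inl ⟨n - 1, by omega⟩, k')))} =>
        (monomial d.1 (1:ℂ) : QMB.Po n N₁ N₂) with hmonfam
    set p : QMB.Po n N₁ N₂ := Finsupp.linearCombination ℂ monfam l with hp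
    have hLp : L p = 0 := by
      rw [hp, Finsupp.apply_linearCombination]
      exact hl
    have hpI : p ∈ I := by
      rw [← Ideal.Quotient.eq_zero_iff_mem, ← hLmk]
      exact hLp
    have hNF : QMB.NF hn p = 0 := QMB.NF_ideal hn hpI
    have hNFp : QMB.NF hn p = p := by
      rw [hp, Finsupp.linearCombination_apply, Finsupp.sum, map_sum]
      apply Finset.sum_congr rfl
      intro d _
      rw [map_smul, hmonfam]
      simp only
      rw [QMB.NF_monomial hn, QMB.nf_irred hn ((QMB.std_iff hn d.1).mp d.2)]
    have hp0 : Finsupp.linearCombination ℂ monfam l = 0 := by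
      rw [← hp, ← hNFp, hNF]
    have hind : LinearIndependent ℂ monfam := by
      have hb := (MvPolynomial.basisMonomials ((Fin n ⊕ Fin n) × QIdx N₁ N₂) ℂ).linearIndependent
      have hcomp := hb.comp (fun d : {d : ((Fin n ⊕ Fin n) × QIdx N₁ N₂) →₀ ℕ //
          (∀ k : QIdx N₁ N₂,
            ¬ (1 ≤ d (Sum.inr ⟨0, by omega⟩, k) ∧ 1 ≤ d (Sum.inl ⟨0, by omega⟩, k))) ∧
          (∀ k k' : QIdx N₁ N₂, (k' : ℤ) = (k : ℤ) + 1 →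
            ¬ (1 ≤ d (Sum.inr ⟨n - 1, by omega⟩, k) ∧
               1 ≤ d (Sum.inl ⟨n - 1, by omega⟩, k')))} => d.1)
        (fun a b h => Subtype.ext h)
      have : (⇑(MvPolynomial.basisMonomials ((Fin n ⊕ Fin n) × QIdx N₁ N₂) ℂ) ∘
          fun d : {d : ((Fin n ⊕ Fin n) × QIdx N₁ N₂) →₀ ℕ //
          (∀ k : QIdx N₁ N₂,
            ¬ (1 ≤ d (Sum.inr ⟨0, by omega⟩, k) ∧ 1 ≤ d (Sum.inl ⟨0, by omega⟩, k))) ∧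
          (∀ k k' : QIdx N₁ N₂, (k' : ℤ) = (k : ℤ) + 1 →
            ¬ (1 ≤ d (Sum.inr ⟨n - 1, by omega⟩, k) ∧
               1 ≤ d (Sum.inl ⟨n - 1, by omega⟩, k')))} => d.1) = monfam := by
        funext d
        simp only [Function.comp, MvPolynomial.coe_basisMonomials, hmonfam]
      rwa [this] at hcomp
    exact linearIndependent_iff.mp hind l hp0
  · rw [eq_top_iff]
    rintro z -
    obtain ⟨p, rfl⟩ := Ideal.Quotient.mk_surjective z
    have h1 : Ideal.Quotient.mk I p = Ideal.Quotient.mk I (QMB.NF hn p) := by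
      rw [Ideal.Quotient.eq]
      exact QMB.sub_NF_mem hn p
    rw [h1]
    have h2 : QMB.NF hn p ∈ QMB.stdSpan hn := QMB.NF_mem_stdSpan hn p
    rw [← hLmk]
    have h3 : ∀ x, x ∈ QMB.stdSpan hn → L x ∈ Submodule.span ℂ
        (Set.range (fun d : {d : ((Fin n ⊕ Fin n) × QIdx N₁ N₂) →₀ ℕ //
          (∀ k : QIdx N₁ N₂,
            ¬ (1 ≤ d (Sum.inr ⟨0, by omega⟩, k) ∧ 1 ≤ d (Sum.inl ⟨0, by omega⟩, k))) ∧
          (∀ k k' : QIdx N₁ N₂, (k' : ℤ) = (k : ℤ) + 1 →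
            ¬ (1 ≤ d (Sum.inr ⟨n - 1, by omega⟩, k) ∧
               1 ≤ d (Sum.inl ⟨n - 1, by omega⟩, k')))} =>
        Ideal.Quotient.mk (qmIdeal n N₁ N₂) (monomial d.1 (1 : ℂ)))) := by
      intro x hx
      induction hx using Submodule.span_induction with
      | mem y hy =>
        obtain ⟨d, hstd, rfl⟩ := hy
        exact Submodule.subset_span ⟨⟨d, (QMB.std_iff hn d).mpr hstd⟩, rfl⟩
      | zero => rw [map_zero]; exact zero_mem _
      | add y z _ _ hy hz => rw [map_add]; exact add_mem hy hz
      | smul a y _ hy => rw [map_smul]; exact Submodule.smul_mem _ _ hy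
    exact h3 _ h2
end
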